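/- (TransRL with uniform teacher equals SAC, Q-function form.) Suppose π_TC s is the uniform PMF on A for every s, and let n = |A|. Define the soft (SAC) Bellman operator of a full-support policy π by (T^H_π Q)(s,a) = r s a + γ · Σ_{s'} (p s a s') · Σ_{a'} (π s' a') · (Q(s',a') − α · log(π s' a')). Then for every full-support policy π, the unique fixed point Q^π of the augmented Bellman operator T_π and the unique fixed point Q^{π,H} of T^H_π satisfy Q^π(s,a) = Q^{π,H}(s,a) − γ · α · log n / (1 − γ) for all (s,a). -/

import Mathlib

open scoped BigOperators

variable {S A : Type*}

/-- A policy has full support if it assigns positive probability to every action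
in every state. -/
def FullSupport (π : S → PMF A) : Prop :=
  ∀ s a, 0 < ((π s) a).toReal

/-- The augmented Bellman operator of TransRL:
`(T_π Q)(s,a) = r s a + γ · Σ_{s'} p(s'|s,a) · Σ_{a'} π(a'|s') ·
  (Q(s',a') + α · log(π_TC(a'|s') / π(a'|s')))`,
where terms with `π(a'|s') = 0` contribute `0`. -/
noncomputable def augBellman [Fintype S] [Fintype A]
    (p : S → A → PMF S) (r : S → A → ℝ) (γ α : ℝ) (πTC : S → PMF A)
    (π : S → PMF A) (Q : S → A → ℝ) : S → A → ℝ :=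
  fun s a => r s a + γ * ∑ s' : S, ((p s a) s').toReal *
    ∑ a' : A, ((π s') a').toReal *
      (Q s' a' + α * Real.log (((πTC s') a').toReal / ((π s') a').toReal))

/-- The per-state policy improvement objective
`J_Q(π, s) = Σ_a π(a|s) · (log π(a|s) − log π_TC(a|s) − Q(s,a)/α)`,
with terms where `π(a|s) = 0` contributing `0`. -/
noncomputable def impObj [Fintype A] (πTC : S → PMF A) (α : ℝ)
    (Q : S → A → ℝ) (π : S → PMF A) (s : S) : ℝ :=
  ∑ a : A, ((π s) a).toReal *
    (Real.log ((π s) a).toReal - Real.log (((πTC s) a).toReal) - Q s a / α)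

/-- The auxiliary state value
`V(s) = Σ_a π(a|s) · (Q(s,a) + α · log(π_TC(a|s)/π(a|s)))`. -/
noncomputable def auxValue [Fintype A] (πTC : S → PMF A) (α : ℝ)
    (Q : S → A → ℝ) (π : S → PMF A) (s : S) : ℝ :=
  ∑ a : A, ((π s) a).toReal *
    (Q s a + α * Real.log (((πTC s) a).toReal / ((π s) a).toReal))

/-- The soft (SAC) Bellman operator:
`(T^H_π Q)(s,a) = r s a + γ · Σ_{s'} p(s'|s,a) · Σ_{a'} π(a'|s') ·
  (Q(s',a') − α · log π(a'|s'))`. -/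
noncomputable def softBellman [Fintype S] [Fintype A]
    (p : S → A → PMF S) (r : S → A → ℝ) (γ α : ℝ)
    (π : S → PMF A) (Q : S → A → ℝ) : S → A → ℝ :=
  fun s a => r s a + γ * ∑ s' : S, ((p s a) s').toReal *
    ∑ a' : A, ((π s') a').toReal * (Q s' a' - α * Real.log (((π s') a').toReal))

lemma pmf_sum_toReal {B : Type*} [Fintype B] (q : PMF B) :
    ∑ b : B, (q b).toReal = 1 := by
  rw [← ENNReal.toReal_sum (fun b _ => q.apply_ne_top b)]
  rw [← tsum_fintype (L := SummationFilter.unconditional _), q.tsum_coe, ENNReal.toReal_one]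

theorem uniform_teacher_Q_eq_sac_Q [Fintype S] [Fintype A] [Nonempty S] [Nonempty A]
    (p : S → A → PMF S) (r : S → A → ℝ) (γ α : ℝ)
    (hγ0 : 0 ≤ γ) (hγ1 : γ < 1) (hα : 0 < α)
    (πTC : S → PMF A)
    (hTCu : ∀ s a, ((πTC s) a).toReal = 1 / (Fintype.card A : ℝ))
    (π : S → PMF A) (hπ : FullSupport π)
    (Qaug : S → A → ℝ) (hfixAug : augBellman p r γ α πTC π Qaug = Qaug)
    (Qsoft : S → A → ℝ) (hfixSoft : softBellman p r γ α π Qsoft = Qsoft) :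
    ∀ s a, Qaug s a =
      Qsoft s a - γ * α * Real.log (Fintype.card A : ℝ) / (1 - γ) := by
  have hγne : (1 : ℝ) - γ ≠ 0 := by intro h; linarith
  have hnpos : (0 : ℝ) < (Fintype.card A : ℝ) := by
    exact_mod_cast Fintype.card_pos
  set n : ℝ := (Fintype.card A : ℝ) with hn
  set c : ℝ := γ * α * Real.log n / (1 - γ) with hcdef
  have hc : γ * c + γ * (α * Real.log n) = c := by
    rw [hcdef]; field_simp; ring
  set D : S → A → ℝ := fun s a => Qaug s a - (Qsoft s a - c) with hD
  have hkey : ∀ s a, D s a = γ * ∑ s' : S, ((p s a) s').toReal *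
      ∑ a' : A, ((π s') a').toReal * D s' a' := by
    intro s a
    have h1 := congrFun (congrFun hfixAug s) a
    have h2 := congrFun (congrFun hfixSoft s) a
    simp only [augBellman] at h1
    simp only [softBellman] at h2
    have hinner : ∀ s' : S,
        ∑ a' : A, ((π s') a').toReal *
          (Qaug s' a' + α * Real.log (((πTC s') a').toReal / ((π s') a').toReal))
        = ((∑ a' : A, ((π s') a').toReal * (Qsoft s' a' - α * Real.log (((π s') a').toReal)))
          + (∑ a' : A, ((π s') a').toReal * D s' a')) - (c + α * Real.log n) := by
      intro s'
      have hpt : ∀ a' : A, ((π s') a').toReal *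
          (Qaug s' a' + α * Real.log (((πTC s') a').toReal / ((π s') a').toReal))
          = (((π s') a').toReal * (Qsoft s' a' - α * Real.log (((π s') a').toReal))
            + ((π s') a').toReal * D s' a')
            - ((π s') a').toReal * (c + α * Real.log n) := by
        intro a'
        have hπpos := hπ s' a'
        rw [hTCu s' a', Real.log_div (by positivity) (ne_of_gt hπpos), one_div,
          Real.log_inv]
        simp only [hD]
        ring
      rw [Finset.sum_congr rfl (fun a' _ => hpt a'), Finset.sum_sub_distrib,
        Finset.sum_add_distrib, ← Finset.sum_mul, pmf_sum_toReal, one_mul]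
    rw [Finset.sum_congr rfl
      (fun s' _ => congrArg (HMul.hMul ((p s a) s').toReal) (hinner s'))] at h1
    have hdist : ∑ s' : S, ((p s a) s').toReal *
        (((∑ a' : A, ((π s') a').toReal * (Qsoft s' a' - α * Real.log (((π s') a').toReal)))
          + (∑ a' : A, ((π s') a').toReal * D s' a')) - (c + α * Real.log n))
        = (∑ s' : S, ((p s a) s').toReal *
            ∑ a' : A, ((π s') a').toReal * (Qsoft s' a' - α * Real.log (((π s') a').toReal)))
          + (∑ s' : S, ((p s a) s').toReal * ∑ a' : A, ((π s') a').toReal * D s' a')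
          - (c + α * Real.log n) := by
      simp only [mul_sub, mul_add, Finset.sum_sub_distrib, Finset.sum_add_distrib,
        ← Finset.sum_mul, pmf_sum_toReal, one_mul]
    rw [hdist] at h1
    have hDsa : D s a = Qaug s a - (Qsoft s a - c) := rfl
    linear_combination hDsa - h1 + h2 - hc
  have hne : (Finset.univ : Finset (S × A)).Nonempty := Finset.univ_nonempty
  set M : ℝ := Finset.univ.sup' hne (fun x : S × A => |D x.1 x.2|) with hM
  have hMle : ∀ s a, |D s a| ≤ M := fun s a =>
    Finset.le_sup' (fun x : S × A => |D x.1 x.2|) (Finset.mem_univ (s, a))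
  obtain ⟨x, -, hx⟩ := Finset.exists_mem_eq_sup' hne (fun x : S × A => |D x.1 x.2|)
  have hM0 : 0 ≤ M := le_trans (abs_nonneg _) (hMle x.1 x.2)
  have hstep : M ≤ γ * M := by
    conv_lhs => rw [hM, hx]
    rw [hkey x.1 x.2, abs_mul, abs_of_nonneg hγ0]
    apply mul_le_mul_of_nonneg_left _ hγ0
    calc |∑ s' : S, ((p x.1 x.2) s').toReal * ∑ a' : A, ((π s') a').toReal * D s' a'|
        ≤ ∑ s' : S, |((p x.1 x.2) s').toReal * ∑ a' : A, ((π s') a').toReal * D s' a'| :=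
          Finset.abs_sum_le_sum_abs _ _
      _ ≤ ∑ s' : S, ((p x.1 x.2) s').toReal * M := by
          apply Finset.sum_le_sum; intro s' _
          rw [abs_mul, abs_of_nonneg ENNReal.toReal_nonneg]
          apply mul_le_mul_of_nonneg_left _ ENNReal.toReal_nonneg
          calc |∑ a' : A, ((π s') a').toReal * D s' a'|
              ≤ ∑ a' : A, |((π s') a').toReal * D s' a'| := Finset.abs_sum_le_sum_abs _ _
            _ ≤ ∑ a' : A, ((π s') a').toReal * M := by
                apply Finset.sum_le_sum; intro a' _
                rw [abs_mul, abs_of_nonneg ENNReal.toReal_nonneg]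
                exact mul_le_mul_of_nonneg_left (hMle s' a') ENNReal.toReal_nonneg
            _ = M := by rw [← Finset.sum_mul, pmf_sum_toReal, one_mul]
      _ = M := by rw [← Finset.sum_mul, pmf_sum_toReal, one_mul]
  have hMzero : M = 0 := by nlinarith
  intro s a
  have hDa : |D s a| ≤ 0 := hMzero ▸ hMle s a
  have h0 : D s a = 0 := abs_eq_zero.mp (le_antisymm hDa (abs_nonneg _))
  have h0' : Qaug s a - (Qsoft s a - c) = 0 := h0
  linarith
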